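/- For every language of correct protocols PROT, the class CL(1NB_PROT A) of languages accepted by 1NB_PROT-automata is a rational cone closed under union: (1) if L ∈ CL(1NB_PROT A) and L' = T(L) for some finite-state transducer T, then L' ∈ CL(1NB_PROT A); and (2) if L₁, L₂ ∈ CL(1NB_PROT A) are languages over a common alphabet Σ, then L₁ ∪ L₂ ∈ CL(1NB_PROT A). -/

import Mathlib

/-! ### Finite-state transducers -/

/-- A finite-state transducer from alphabet `α` to alphabet `β`, with state type `Q`:
an initial state, a set of accepting states, and a finite set of transitions
`(q, x, y, q')` reading `x ∈ α ∪ {ε}` and writing the word `y ∈ β*`. -/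
structure FST (α β Q : Type) where
  init : Q
  accept : Set Q
  trans : Set (Q × Option α × List β × Q)
  trans_fin : trans.Finite

/-- Paths of a transducer: `T.Path q u v q'` holds iff some sequence of transitions
leads from `q` to `q'` with input labels concatenating to `u` and output labels
concatenating to `v`. -/
inductive FST.Path {α β Q : Type} (T : FST α β Q) : Q → List α → List β → Q → Prop
  | refl (q : Q) : FST.Path T q [] [] q
  | step {q q' q'' : Q} {x : Option α} {y : List β} {u : List α} {v : List β} :
      (q, x, y, q') ∈ T.trans → FST.Path T q' u v q'' →
      FST.Path T q (x.toList ++ u) (y ++ v) q''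

/-- The relation computed by a transducer. -/
def FST.Rel {α β Q : Type} (T : FST α β Q) (u : List α) (v : List β) : Prop :=
  ∃ f ∈ T.accept, T.Path T.init u v f

/-- The image `T(B)` of a language under the relation computed by a transducer. -/
def FST.Img {α β Q : Type} (T : FST α β Q) (B : Set (List α)) : Set (List β) :=
  {v | ∃ u ∈ B, T.Rel u v}

/-- A transducer is deterministic if, for each state `q`, the transitions leaving `q`
either consist of a single transition with input label `ε`, or all have pairwise
distinct input labels, none of which is `ε`. -/
def FST.Det {α β Q : Type} (T : FST α β Q) : Prop :=
  ∀ q : Q,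
    (∃ t ∈ T.trans, t.1 = q ∧ t.2.1 = (none : Option α) ∧
        ∀ t' ∈ T.trans, t'.1 = q → t' = t) ∨
    ((∀ t ∈ T.trans, t.1 = q → t.2.1 ≠ none) ∧
      ∀ t ∈ T.trans, ∀ t' ∈ T.trans, t.1 = q → t'.1 = q → t.2.1 = t'.2.1 → t = t')

/-- Rational dominance: `RatDom A B` iff `A = T(B)` for some finite-state transducer. -/
def RatDom {α β : Type} (A : Set (List α)) (B : Set (List β)) : Prop :=
  ∃ (n : ℕ) (T : FST β α (Fin n)), T.Img B = A

/-! ### Protocols -/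

/-- The protocol alphabet `Γ_wr ∪ Γ_qu ∪ Γ_re` (disjoint union). -/
abbrev PLet (W Q R : Type) := W ⊕ Q ⊕ R

def wrLet {W Q R : Type} (w : W) : PLet W Q R := Sum.inl w
def quLet {W Q R : Type} (q : Q) : PLet W Q R := Sum.inr (Sum.inl q)
def reLet {W Q R : Type} (r : R) : PLet W Q R := Sum.inr (Sum.inr r)

/-- The query block `u q r`. -/
def pblock {W Q R : Type} (u : List W) (q : Q) (r : R) : List (PLet W Q R) :=
  u.map wrLet ++ [quLet q, reLet r]

/-- A word over the protocol alphabet is a protocol (w.r.t. the validity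
relation `valid`) iff it is a concatenation of query blocks `uᵢqᵢrᵢ` with
`valid qᵢ rᵢ`. -/
inductive IsProtocol {W Q R : Type} (valid : Q → R → Prop) : List (PLet W Q R) → Prop
  | nil : IsProtocol valid []
  | block (u : List W) (q : Q) (r : R) (p : List (PLet W Q R)) :
      valid q r → IsProtocol valid p → IsProtocol valid (pblock u q r ++ p)

/-- A language of correct protocols over the alphabets `W = Γ_wr`, `Q = Γ_qu`,
`R = Γ_re`, satisfying axioms (i)-(v). -/
structure ProtLang (W Q R : Type) where
  valid : Q → R → Prop
  prot : Set (List (PLet W Q R))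
  /-- (i) the empty protocol is correct -/
  empty_mem : [] ∈ prot
  /-- (ii) every member is a protocol -/
  mem_protocol : ∀ p ∈ prot, IsProtocol valid p
  /-- (iii) closure under protocol prefixes -/
  prefix_mem : ∀ p₁ p₂ : List (PLet W Q R), p₁ ++ p₂ ∈ prot → IsProtocol valid p₁ → p₁ ∈ prot
  /-- (iv) every query has some valid response extending the protocol -/
  extend : ∀ p ∈ prot, ∀ (u : List W) (q : Q), ∃ r : R, p ++ pblock u q r ∈ prot
  /-- (v) the response to a query is uniquely determined -/
  resp_unique : ∀ (p : List (PLet W Q R)) (u : List W) (q : Q) (r r' : R)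
      (s : List (PLet W Q R)),
      p ++ pblock u q r ∈ prot → p ++ pblock u q r' ++ s ∈ prot → r' = r

/-! ### Automata with an auxiliary data structure -/

/-- Input-tape letters: input letters plus the two endmarkers. -/
inductive EndM (σ : Type) where
  | lt : σ → EndM σ
  | lmark : EndM σ
  | rmark : EndM σ

/-- The input tape `⊢ w ⊣`. -/
def tape {σ : Type} (w : List σ) : List (EndM σ) :=
  EndM.lmark :: (w.map EndM.lt ++ [EndM.rmark])

/-- A one-way automaton equipped with an auxiliary data structure
(a `1NB_PROT`-automaton), over input alphabet `σ`, with state type `S`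
split into writing states (`isWr`) and query states (`¬ isWr`). -/
structure ProtAut (σ W Q R S : Type) where
  isWr : S → Prop
  s₀ : S
  F : Set S
  s₀_not_F : s₀ ∉ F
  transWr : Set (S × Option (EndM σ) × List W × S)
  transQu : Set (S × Q × R × S)
  wr_src : ∀ t ∈ transWr, isWr t.1
  qu_src : ∀ t ∈ transQu, ¬ isWr t.1
  qu_tgt : ∀ t ∈ transQu, isWr t.2.2.2
  transWr_fin : transWr.Finite

/-- Configurations `(s, v, u, p)`: state, unprocessed input, query tape, protocol. -/
abbrev PConfig (σ W Q R S : Type) := S × List (EndM σ) × List W × List (PLet W Q R)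

/-- The move relation of an automaton with an ADS, relative to the language `P`
of correct protocols. -/
inductive ProtStep {σ W Q R S : Type} (M : ProtAut σ W Q R S)
    (P : Set (List (PLet W Q R))) : PConfig σ W Q R S → PConfig σ W Q R S → Prop
  | wr {s s' : S} {a : Option (EndM σ)} {x : List W} {v : List (EndM σ)}
      {u : List W} {p : List (PLet W Q R)} :
      (s, a, x, s') ∈ M.transWr →
      ProtStep M P (s, a.toList ++ v, u, p) (s', v, u ++ x, p)
  | qu {s s' : S} {q : Q} {r : R} {v : List (EndM σ)} {u : List W}
      {p : List (PLet W Q R)} :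
      (s, q, r, s') ∈ M.transQu → p ++ pblock u q r ∈ P →
      ProtStep M P (s, v, u, p) (s', v, [], p ++ pblock u q r)

/-- `M` has an accepting run on `w` that produces the protocol `p`. -/
def ProtAut.AcceptsWith {σ W Q R S : Type} (M : ProtAut σ W Q R S)
    (P : Set (List (PLet W Q R))) (w : List σ) (p : List (PLet W Q R)) : Prop :=
  ∃ sf ∈ M.F,
    Relation.ReflTransGen (ProtStep M P) (M.s₀, tape w, [], []) (sf, [], [], p)

/-- `M` accepts the word `w`. -/
def ProtAut.Accepts {σ W Q R S : Type} (M : ProtAut σ W Q R S)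
    (P : Set (List (PLet W Q R))) (w : List σ) : Prop :=
  ∃ p ∈ P, M.AcceptsWith P w p

/-- The language accepted by `M`. -/
def ProtAut.Lang {σ W Q R S : Type} (M : ProtAut σ W Q R S)
    (P : Set (List (PLet W Q R))) : Set (List σ) :=
  {w | M.Accepts P w}

/-- `M` is deterministic: each configuration has at most one successor. -/
def ProtAut.Deterministic {σ W Q R S : Type} (M : ProtAut σ W Q R S)
    (P : Set (List (PLet W Q R))) : Prop :=
  ∀ c c₁ c₂ : PConfig σ W Q R S, ProtStep M P c c₁ → ProtStep M P c c₂ → c₁ = c₂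

/-- The class of languages over `σ` accepted by `1NB_PROT`-automata. -/
def ProtCL {W Q R : Type} (P : ProtLang W Q R) (σ : Type) : Set (Set (List σ)) :=
  {L | ∃ (n : ℕ) (M : ProtAut σ W Q R (Fin n)), L = M.Lang P.prot}

/-- The class of languages over `σ` accepted by deterministic `1DB_PROT`-automata. -/
def ProtCLdet {W Q R : Type} (P : ProtLang W Q R) (σ : Type) : Set (Set (List σ)) :=
  {L | ∃ (n : ℕ) (M : ProtAut σ W Q R (Fin n)),
    M.Deterministic P.prot ∧ L = M.Lang P.prot}

/-! ### Concatenation and Kleene star of languages -/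

def LangConcat {σ : Type} (L₁ L₂ : Set (List σ)) : Set (List σ) :=
  {w | ∃ u ∈ L₁, ∃ v ∈ L₂, w = u ++ v}

def LangStar {σ : Type} (L : Set (List σ)) : Set (List σ) :=
  {w | ∃ ws : List (List σ), (∀ u ∈ ws, u ∈ L) ∧ w = ws.flatten}
namespace Stmt19
open Relation

variable {σ W Q R S : Type} {M : ProtAut σ W Q R S} {P : Set (List (PLet W Q R))}

/-- Input-free steps: state/query-tape/protocol evolution that does not consume input. -/
inductive EStep (M : ProtAut σ W Q R S) (P : Set (List (PLet W Q R))) :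
    (S × List W × List (PLet W Q R)) → (S × List W × List (PLet W Q R)) → Prop
  | wr {s s' : S} {x : List W} {u : List W} {p : List (PLet W Q R)} :
      (s, (none : Option (EndM σ)), x, s') ∈ M.transWr → EStep M P (s, u, p) (s', u ++ x, p)
  | qu {s s' : S} {q : Q} {r : R} {u : List W} {p : List (PLet W Q R)} :
      (s, q, r, s') ∈ M.transQu → p ++ pblock u q r ∈ P →
      EStep M P (s, u, p) (s', [], p ++ pblock u q r)

lemma step_wr' {s s' : S} {a : Option (EndM σ)} {x u u' : List W} {v v' : List (EndM σ)}
    {p : List (PLet W Q R)} (h : (s, a, x, s') ∈ M.transWr)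
    (hv : v = a.toList ++ v') (hu : u' = u ++ x) :
    ProtStep M P (s, v, u, p) (s', v', u', p) := by
  subst hv hu; exact ProtStep.wr h

lemma estep_step {c c' : S × List W × List (PLet W Q R)} (h : EStep M P c c')
    (v : List (EndM σ)) :
    ProtStep M P (c.1, v, c.2) (c'.1, v, c'.2) := by
  cases h with
  | wr h => exact step_wr' h rfl rfl
  | qu h hp => exact ProtStep.qu h hp

lemma estep_run {c c' : S × List W × List (PLet W Q R)}
    (h : ReflTransGen (EStep M P) c c') (v : List (EndM σ)) :
    ReflTransGen (ProtStep M P) (c.1, v, c.2) (c'.1, v, c'.2) :=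
  ReflTransGen.lift (fun c : S × List W × List (PLet W Q R) => (c.1, v, c.2)) (fun _ _ hs => estep_step hs v) _ _ h

lemma step_append {c c' : PConfig σ W Q R S} (h : ProtStep M P c c') (z : List (EndM σ)) :
    ProtStep M P (c.1, c.2.1 ++ z, c.2.2) (c'.1, c'.2.1 ++ z, c'.2.2) := by
  cases h with
  | wr h => exact step_wr' h (by simp) rfl
  | qu h hp => exact ProtStep.qu h hp

lemma run_append {c c' : PConfig σ W Q R S}
    (h : ReflTransGen (ProtStep M P) c c') (z : List (EndM σ)) :
    ReflTransGen (ProtStep M P) (c.1, c.2.1 ++ z, c.2.2) (c'.1, c'.2.1 ++ z, c'.2.2) :=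
  ReflTransGen.lift (fun c : PConfig σ W Q R S => (c.1, c.2.1 ++ z, c.2.2)) (fun _ _ hs => step_append hs z) _ _ h

/-- A run starting from empty input never consumes input. -/
lemma nil_run_aux {c c' : PConfig σ W Q R S}
    (h : ReflTransGen (ProtStep M P) c c') (hc : c.2.1 = []) :
    ReflTransGen (EStep M P) (c.1, c.2.2) (c'.1, c'.2.2) := by
  induction h using ReflTransGen.head_induction_on with
  | refl => exact ReflTransGen.refl
  | head hs _ ih =>
    cases hs with
    | @wr s1 s1' a x v u1 p1 h =>
      cases a with
      | some a => simp at hc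
      | none =>
        have hv : v = [] := hc
        exact ReflTransGen.head (EStep.wr h) (ih (by simpa using hv))
    | qu h hp => exact ReflTransGen.head (EStep.qu h hp) (ih hc)

lemma nil_run {s s' : S} {u u' : List W} {p p' : List (PLet W Q R)}
    (h : ReflTransGen (ProtStep M P) (s, ([] : List (EndM σ)), u, p) (s', [], u', p')) :
    ReflTransGen (EStep M P) (s, u, p) (s', u', p') :=
  nil_run_aux h rfl


lemma peel_aux {c : PConfig σ W Q R S} {a : EndM σ} {v : List (EndM σ)}
    {s' : S} {u' : List W} {p' : List (PLet W Q R)}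
    (h : ReflTransGen (ProtStep M P) c (s', [], u', p')) (hc : c.2.1 = a :: v) :
    ∃ s₁ u₁ p₁ s₂ x, ReflTransGen (EStep M P) (c.1, c.2.2) (s₁, u₁, p₁) ∧
      (s₁, some a, x, s₂) ∈ M.transWr ∧
      ReflTransGen (ProtStep M P) (s₂, v, u₁ ++ x, p₁) (s', [], u', p') := by
  induction h using ReflTransGen.head_induction_on with
  | refl => simp at hc
  | head hs hrest ih =>
    cases hs with
    | @wr s1 s1' a0 x v0 u1 p1 hm =>
      cases a0 with
      | none =>
        have hv : v0 = a :: v := hc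
        obtain ⟨s₁, u₁, p₁, s₂, x₂, h1, h2, h3⟩ := ih (by simpa using hv)
        exact ⟨s₁, u₁, p₁, s₂, x₂, ReflTransGen.head (EStep.wr hm) h1, h2, h3⟩
      | some b =>
        have hv : b :: v0 = a :: v := hc
        injection hv with hb hv0
        subst hb; subst hv0
        exact ⟨s1, u1, p1, s1', x, ReflTransGen.refl, hm, hrest⟩
    | qu hq hp =>
      obtain ⟨s₁, u₁, p₁, s₂, x₂, h1, h2, h3⟩ := ih hc
      exact ⟨s₁, u₁, p₁, s₂, x₂, ReflTransGen.head (EStep.qu hq hp) h1, h2, h3⟩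

lemma peel {a : EndM σ} {v : List (EndM σ)} {s s' : S} {u u' : List W}
    {p p' : List (PLet W Q R)}
    (h : ReflTransGen (ProtStep M P) (s, a :: v, u, p) (s', [], u', p')) :
    ∃ s₁ u₁ p₁ s₂ x, ReflTransGen (EStep M P) (s, u, p) (s₁, u₁, p₁) ∧
      (s₁, some a, x, s₂) ∈ M.transWr ∧
      ReflTransGen (ProtStep M P) (s₂, v, u₁ ++ x, p₁) (s', [], u', p') :=
  peel_aux h rfl

/-- Appending a transition at the end of a transducer path. -/
lemma FST.Path.snoc {α β QT : Type} {T : FST α β QT} {q q' q'' : QT}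
    {u : List α} {v : List β} {x : Option α} {y : List β}
    (h : T.Path q u v q') (ht : (q', x, y, q'') ∈ T.trans) :
    T.Path q (u ++ x.toList) (v ++ y) q'' := by
  induction h with
  | refl q =>
    have := FST.Path.step ht (FST.Path.refl (T := T) q'')
    simpa using this
  | @step a b c x0 y0 u0 v0 hmem _ ih =>
    have := FST.Path.step hmem (ih ht)
    simpa [List.append_assoc] using this

end Stmt19

namespace Stmt19
open Relation

section MapAut
variable {σ W Q R S S' : Type} (e : S ≃ S') (M : ProtAut σ W Q R S)
  {P : Set (List (PLet W Q R))}

/-- Relabel the states of an automaton along an equivalence. -/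
def mapAut : ProtAut σ W Q R S' where
  isWr s := M.isWr (e.symm s)
  s₀ := e M.s₀
  F := e '' M.F
  s₀_not_F := by
    intro h
    obtain ⟨s, hs, hes⟩ := h
    exact M.s₀_not_F (e.injective hes ▸ hs)
  transWr := (fun t => (e t.1, t.2.1, t.2.2.1, e t.2.2.2)) '' M.transWr
  transQu := (fun t => (e t.1, t.2.1, t.2.2.1, e t.2.2.2)) '' M.transQu
  wr_src := by rintro t ⟨t0, h0, rfl⟩; simpa using M.wr_src t0 h0
  qu_src := by rintro t ⟨t0, h0, rfl⟩; simpa using M.qu_src t0 h0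
  qu_tgt := by rintro t ⟨t0, h0, rfl⟩; simpa using M.qu_tgt t0 h0
  transWr_fin := M.transWr_fin.image _

lemma mapAut_step {c c' : PConfig σ W Q R S} (h : ProtStep M P c c') :
    ProtStep (mapAut e M) P (e c.1, c.2) (e c'.1, c'.2) := by
  cases h with
  | wr h => exact ProtStep.wr ⟨_, h, rfl⟩
  | qu h hp => exact ProtStep.qu (Set.mem_image_of_mem _ h) hp

lemma mapAut_step_inv {c c' : PConfig σ W Q R S'} (h : ProtStep (mapAut e M) P c c') :
    ProtStep M P (e.symm c.1, c.2) (e.symm c'.1, c'.2) := by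
  cases h with
  | wr h =>
    obtain ⟨⟨q1, a1, x1, q2⟩, h0, heq⟩ := h
    obtain ⟨h1, h2, h3, h4⟩ : e q1 = _ ∧ a1 = _ ∧ x1 = _ ∧ e q2 = _ := by
      simpa [Prod.ext_iff] using heq
    subst h2 h3
    simpa [← h1, ← h4] using ProtStep.wr (M := M) (P := P)
      (v := _) (u := _) (p := _) h0
  | qu h hp =>
    obtain ⟨⟨q1, a1, x1, q2⟩, h0, heq⟩ := h
    obtain ⟨h1, h2, h3, h4⟩ : e q1 = _ ∧ a1 = _ ∧ x1 = _ ∧ e q2 = _ := by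
      simpa [Prod.ext_iff] using heq
    subst h2 h3
    simpa [← h1, ← h4] using ProtStep.qu (M := M) (P := P) (v := _) h0 hp

lemma mapAut_lang : (mapAut e M).Lang P = M.Lang P := by
  ext w
  constructor
  · rintro ⟨p, hp, sf, hsf, hrun⟩
    refine ⟨p, hp, e.symm sf, ?_, ?_⟩
    · obtain ⟨s, hs, hes⟩ := hsf
      simpa [← hes] using hs
    · have := ReflTransGen.lift (fun c : PConfig σ W Q R S' => (e.symm c.1, c.2))
        (fun _ _ hs => mapAut_step_inv e M hs) _ _ hrun
      simpa [mapAut, Function.onFun] using this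
  · rintro ⟨p, hp, sf, hsf, hrun⟩
    refine ⟨p, hp, e sf, Set.mem_image_of_mem _ hsf, ?_⟩
    have := ReflTransGen.lift (fun c : PConfig σ W Q R S => (e c.1, c.2))
      (fun _ _ hs => mapAut_step e M hs) _ _ hrun
    simpa [mapAut] using this

end MapAut

/-- Any automaton with a finite state type recognizes a language in the class. -/
lemma lang_mem_protCL {σ W Q R S : Type} [Finite S] (M : ProtAut σ W Q R S)
    (P : ProtLang W Q R) : M.Lang P.prot ∈ ProtCL P σ := by
  obtain ⟨n, ⟨e⟩⟩ := Finite.exists_equiv_fin S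
  exact ⟨n, mapAut e M, (mapAut_lang e M).symm⟩

end Stmt19
namespace Stmt19
open Relation

section Union
variable {σ W Q R S₁ S₂ : Type} (M₁ : ProtAut σ W Q R S₁) (M₂ : ProtAut σ W Q R S₂)
  {P : Set (List (PLet W Q R))}

/-- States of the union automaton. -/
abbrev USt (S₁ S₂ : Type) := Option (S₁ ⊕ S₂)

def umap₁ (t : S₁ × Option (EndM σ) × List W × S₁) :
    USt S₁ S₂ × Option (EndM σ) × List W × USt S₁ S₂ :=
  (some (Sum.inl t.1), t.2.1, t.2.2.1, some (Sum.inl t.2.2.2))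
def umap₂ (t : S₂ × Option (EndM σ) × List W × S₂) :
    USt S₁ S₂ × Option (EndM σ) × List W × USt S₁ S₂ :=
  (some (Sum.inr t.1), t.2.1, t.2.2.1, some (Sum.inr t.2.2.2))
def uqmap₁ (t : S₁ × Q × R × S₁) : USt S₁ S₂ × Q × R × USt S₁ S₂ :=
  (some (Sum.inl t.1), t.2.1, t.2.2.1, some (Sum.inl t.2.2.2))
def uqmap₂ (t : S₂ × Q × R × S₂) : USt S₁ S₂ × Q × R × USt S₁ S₂ :=
  (some (Sum.inr t.1), t.2.1, t.2.2.1, some (Sum.inr t.2.2.2))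

/-- The union automaton. -/
def uAut : ProtAut σ W Q R (USt S₁ S₂) where
  isWr s := match s with
    | none => True
    | some (Sum.inl s) => M₁.isWr s
    | some (Sum.inr s) => M₂.isWr s
  s₀ := none
  F := (fun s => some (Sum.inl s)) '' M₁.F ∪ (fun s => some (Sum.inr s)) '' M₂.F
  s₀_not_F := by rintro (⟨s, -, h⟩ | ⟨s, -, h⟩) <;> simp at h
  transWr :=
    {(none, none, [], some (Sum.inl M₁.s₀)), (none, none, [], some (Sum.inr M₂.s₀))}
      ∪ umap₁ '' M₁.transWr ∪ umap₂ '' M₂.transWr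
  transQu := uqmap₁ '' M₁.transQu ∪ uqmap₂ '' M₂.transQu
  wr_src := by
    rintro t (((rfl | rfl) | ⟨t0, h0, rfl⟩) | ⟨t0, h0, rfl⟩)
    · trivial
    · trivial
    · exact M₁.wr_src t0 h0
    · exact M₂.wr_src t0 h0
  qu_src := by
    rintro t (⟨t0, h0, rfl⟩ | ⟨t0, h0, rfl⟩)
    · exact M₁.qu_src t0 h0
    · exact M₂.qu_src t0 h0
  qu_tgt := by
    rintro t (⟨t0, h0, rfl⟩ | ⟨t0, h0, rfl⟩)
    · exact M₁.qu_tgt t0 h0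
    · exact M₂.qu_tgt t0 h0
  transWr_fin := by
    refine (((Set.finite_singleton _).insert _).union
      (M₁.transWr_fin.image _)).union (M₂.transWr_fin.image _)

lemma uAut_step₁ {c c' : PConfig σ W Q R S₁} (h : ProtStep M₁ P c c') :
    ProtStep (uAut M₁ M₂) P (some (Sum.inl c.1), c.2) (some (Sum.inl c'.1), c'.2) := by
  cases h with
  | wr h => exact ProtStep.wr (Or.inl (Or.inr ⟨_, h, rfl⟩))
  | qu h hp => exact ProtStep.qu (Or.inl ⟨_, h, rfl⟩) hp

lemma uAut_step₂ {c c' : PConfig σ W Q R S₂} (h : ProtStep M₂ P c c') :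
    ProtStep (uAut M₁ M₂) P (some (Sum.inr c.1), c.2) (some (Sum.inr c'.1), c'.2) := by
  cases h with
  | wr h => exact ProtStep.wr (Or.inr ⟨_, h, rfl⟩)
  | qu h hp => exact ProtStep.qu (Or.inr ⟨_, h, rfl⟩) hp

lemma uAut_step₁_inv {s : S₁} {v u p} {c' : PConfig σ W Q R (USt S₁ S₂)}
    (h : ProtStep (uAut M₁ M₂) P (some (Sum.inl s), v, u, p) c') :
    ∃ c₂ : PConfig σ W Q R S₁, c' = (some (Sum.inl c₂.1), c₂.2) ∧
      ProtStep M₁ P (s, v, u, p) c₂ := by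
  cases h with
  | wr h =>
    rcases h with ((h | h) | ⟨⟨q1, a1, x1, q2⟩, h0, heq⟩) | ⟨⟨q1, a1, x1, q2⟩, h0, heq⟩
    · exact absurd (congrArg Prod.fst h) (by simp)
    · exact absurd (congrArg Prod.fst h) (by simp)
    · simp only [umap₁, Prod.mk.injEq, Option.some.injEq, Sum.inl.injEq] at heq
      obtain ⟨rfl, rfl, rfl, rfl⟩ := heq
      exact ⟨_, rfl, ProtStep.wr h0⟩
    · simp [umap₂, Prod.ext_iff] at heq
  | qu h hp =>
    rcases h with ⟨⟨q1, a1, x1, q2⟩, h0, heq⟩ | ⟨⟨q1, a1, x1, q2⟩, h0, heq⟩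
    · simp only [uqmap₁, Prod.mk.injEq, Option.some.injEq, Sum.inl.injEq] at heq
      obtain ⟨rfl, rfl, rfl, rfl⟩ := heq
      exact ⟨_, rfl, ProtStep.qu h0 hp⟩
    · simp [uqmap₂, Prod.ext_iff] at heq

lemma uAut_step₂_inv {s : S₂} {v u p} {c' : PConfig σ W Q R (USt S₁ S₂)}
    (h : ProtStep (uAut M₁ M₂) P (some (Sum.inr s), v, u, p) c') :
    ∃ c₂ : PConfig σ W Q R S₂, c' = (some (Sum.inr c₂.1), c₂.2) ∧
      ProtStep M₂ P (s, v, u, p) c₂ := by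
  cases h with
  | wr h =>
    rcases h with ((h | h) | ⟨⟨q1, a1, x1, q2⟩, h0, heq⟩) | ⟨⟨q1, a1, x1, q2⟩, h0, heq⟩
    · exact absurd (congrArg Prod.fst h) (by simp)
    · exact absurd (congrArg Prod.fst h) (by simp)
    · simp [umap₁, Prod.ext_iff] at heq
    · simp only [umap₂, Prod.mk.injEq, Option.some.injEq, Sum.inr.injEq] at heq
      obtain ⟨rfl, rfl, rfl, rfl⟩ := heq
      exact ⟨_, rfl, ProtStep.wr h0⟩
  | qu h hp =>
    rcases h with ⟨⟨q1, a1, x1, q2⟩, h0, heq⟩ | ⟨⟨q1, a1, x1, q2⟩, h0, heq⟩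
    · simp [uqmap₁, Prod.ext_iff] at heq
    · simp only [uqmap₂, Prod.mk.injEq, Option.some.injEq, Sum.inr.injEq] at heq
      obtain ⟨rfl, rfl, rfl, rfl⟩ := heq
      exact ⟨_, rfl, ProtStep.qu h0 hp⟩

lemma uAut_run₁_inv {c : PConfig σ W Q R S₁} {d : PConfig σ W Q R (USt S₁ S₂)}
    (h : ReflTransGen (ProtStep (uAut M₁ M₂) P) (some (Sum.inl c.1), c.2) d) :
    ∃ c₂ : PConfig σ W Q R S₁, d = (some (Sum.inl c₂.1), c₂.2) ∧
      ReflTransGen (ProtStep M₁ P) c c₂ := by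
  induction h with
  | refl => exact ⟨c, rfl, ReflTransGen.refl⟩
  | tail _ hstep ih =>
    obtain ⟨⟨s2, v2, u2, p2⟩, rfl, hrun⟩ := ih
    obtain ⟨c₃, rfl, hstep'⟩ := uAut_step₁_inv M₁ M₂ (by exact hstep)
    exact ⟨c₃, rfl, hrun.tail hstep'⟩

lemma uAut_run₂_inv {c : PConfig σ W Q R S₂} {d : PConfig σ W Q R (USt S₁ S₂)}
    (h : ReflTransGen (ProtStep (uAut M₁ M₂) P) (some (Sum.inr c.1), c.2) d) :
    ∃ c₂ : PConfig σ W Q R S₂, d = (some (Sum.inr c₂.1), c₂.2) ∧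
      ReflTransGen (ProtStep M₂ P) c c₂ := by
  induction h with
  | refl => exact ⟨c, rfl, ReflTransGen.refl⟩
  | tail _ hstep ih =>
    obtain ⟨⟨s2, v2, u2, p2⟩, rfl, hrun⟩ := ih
    obtain ⟨c₃, rfl, hstep'⟩ := uAut_step₂_inv M₁ M₂ (by exact hstep)
    exact ⟨c₃, rfl, hrun.tail hstep'⟩

lemma uAut_lang : (uAut M₁ M₂).Lang P = M₁.Lang P ∪ M₂.Lang P := by
  ext w
  constructor
  · rintro ⟨p, hp, sf, hsf, hrun⟩
    rw [show (uAut M₁ M₂).s₀ = (none : USt S₁ S₂) from rfl] at hrun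
    generalize hv : tape w = tv at hrun
    rcases hrun.cases_head with heq | ⟨c, hstep, hrun'⟩
    · exfalso
      have : (none : USt S₁ S₂) = sf := congrArg Prod.fst heq
      rcases hsf with ⟨s, -, hs⟩ | ⟨s, -, hs⟩ <;> (cases this; simp at hs)
    · cases hstep with
      | wr h =>
        rename_i a x v0
        rcases h with ((h | h) | ⟨⟨q1, a1, x1, q2⟩, h0, heq⟩) | ⟨⟨q1, a1, x1, q2⟩, h0, heq⟩
        · injection h with h1 h2
          injection h2 with h2 h3
          injection h3 with h3 h4
          subst h2 h3 h4
          have hv' : tape w = v0 := by simpa using hv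
          subst hv'
          obtain ⟨⟨s2, v2, u2, p2⟩, heq2, hrun₁⟩ := uAut_run₁_inv M₁ M₂
            (c := (M₁.s₀, tape w, [] ++ [], [])) (by exact hrun')
          simp only [Prod.mk.injEq] at heq2
          obtain ⟨hs2, rfl, rfl, rfl⟩ := heq2
          rcases hsf with ⟨s, hsF, hs⟩ | ⟨s, hsF, hs⟩
          · left
            refine ⟨p, hp, s2, ?_, by simpa using hrun₁⟩
            have hss : s = s2 := by
              have := hs.trans hs2
              injection this with h5; injection h5
            exact hss ▸ hsF
          · exfalso
            have := hs.trans hs2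
            injection this with h5; simp at h5
        · injection h with h1 h2
          injection h2 with h2 h3
          injection h3 with h3 h4
          subst h2 h3 h4
          have hv' : tape w = v0 := by simpa using hv
          subst hv'
          obtain ⟨⟨s2, v2, u2, p2⟩, heq2, hrun₂⟩ := uAut_run₂_inv M₁ M₂
            (c := (M₂.s₀, tape w, [] ++ [], [])) (by exact hrun')
          simp only [Prod.mk.injEq] at heq2
          obtain ⟨hs2, rfl, rfl, rfl⟩ := heq2
          rcases hsf with ⟨s, hsF, hs⟩ | ⟨s, hsF, hs⟩
          · exfalso
            have := hs.trans hs2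
            injection this with h5; simp at h5
          · right
            refine ⟨p, hp, s2, ?_, by simpa using hrun₂⟩
            have hss : s = s2 := by
              have := hs.trans hs2
              injection this with h5; injection h5
            exact hss ▸ hsF
        · simp [umap₁, Prod.ext_iff] at heq
        · simp [umap₂, Prod.ext_iff] at heq
      | qu h hp0 =>
        rcases h with ⟨⟨q1, a1, x1, q2⟩, h0, heq⟩ | ⟨⟨q1, a1, x1, q2⟩, h0, heq⟩
        · simp [uqmap₁, Prod.ext_iff] at heq
        · simp [uqmap₂, Prod.ext_iff] at heq
  · rintro (⟨p, hp, sf, hsf, hrun⟩ | ⟨p, hp, sf, hsf, hrun⟩)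
    · refine ⟨p, hp, some (Sum.inl sf), Or.inl ⟨sf, hsf, rfl⟩, ?_⟩
      refine ReflTransGen.head (ProtStep.wr (a := none) (x := [])
        (Or.inl (Or.inl (Or.inl rfl)))) ?_
      have := ReflTransGen.lift
        (fun c : PConfig σ W Q R S₁ => ((some (Sum.inl c.1) : USt S₁ S₂), c.2))
        (fun _ _ hs => uAut_step₁ M₁ M₂ hs) _ _ hrun
      simpa [Function.onFun, tape] using this
    · refine ⟨p, hp, some (Sum.inr sf), Or.inr ⟨sf, hsf, rfl⟩, ?_⟩
      refine ReflTransGen.head (ProtStep.wr (a := none) (x := [])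
        (Or.inl (Or.inl (Or.inr rfl)))) ?_
      have := ReflTransGen.lift
        (fun c : PConfig σ W Q R S₂ => ((some (Sum.inr c.1) : USt S₁ S₂), c.2))
        (fun _ _ hs => uAut_step₂ M₁ M₂ hs) _ _ hrun
      simpa [Function.onFun, tape] using this

end Union
end Stmt19
namespace Stmt19
open Relation

instance finiteOption {α : Type} [Finite α] : Finite (Option α) :=
  Finite.of_equiv (α ⊕ PUnit.{1}) (Equiv.optionEquivSumPUnit α).symm

instance {σ : Type} [Finite σ] : Finite (EndM σ) := by
  refine Finite.of_injective (fun e => match e with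
    | EndM.lt s => some (some s)
    | EndM.lmark => none
    | EndM.rmark => some none) ?_
  intro a b h
  cases a <;> cases b <;> simp_all

/-- Phases of the transducer-image automaton. -/
inductive Ph : Type
  | m0 | m1 | m2
deriving DecidableEq

instance : Finite Ph := by
  refine Finite.of_injective (fun p => match p with
    | Ph.m0 => (0 : Fin 3) | Ph.m1 => 1 | Ph.m2 => 2) ?_
  intro a b h
  cases a <;> cases b <;> simp_all

section Trans
variable {σ δ QT W Q R S : Type} (T : FST σ δ QT) (M : ProtAut σ W Q R S)

/-- All suffixes of output words of `T`, used as buffer contents. -/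
def OutS : Set (List δ) := insert [] ((fun t => t.2.2.1) '' T.trans)

def Buf := {l : List δ // ∃ y ∈ OutS T, l <:+ y}

instance : Finite (Buf T) := by
  have h1 : (OutS T).Finite := (T.trans_fin.image _).insert _
  have h2 : {l : List δ | ∃ y ∈ OutS T, l <:+ y}.Finite := by
    have : {l : List δ | ∃ y ∈ OutS T, l <:+ y} = ⋃ y ∈ OutS T, {l | l <:+ y} := by
      ext l; simp
    rw [this]
    exact h1.biUnion fun y _ =>
      (List.finite_toSet y.tails).subset fun l hl => (List.mem_tails l y).mpr hl
  exact h2.to_subtype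

def bnil : Buf T := ⟨[], [], Set.mem_insert _ _, List.nil_suffix⟩

def bsuf {t : QT} {x : Option σ} {y : List δ} {t' : QT} (h : (t, x, y, t') ∈ T.trans) :
    Buf T := ⟨y, y, Set.mem_insert_of_mem _ ⟨(t, x, y, t'), h, rfl⟩, List.suffix_refl y⟩

@[simp] lemma bnil_val : (bnil T).1 = [] := rfl
@[simp] lemma bsuf_val {t : QT} {x : Option σ} {y : List δ} {t' : QT}
    (h : (t, x, y, t') ∈ T.trans) : (bsuf T h).1 = y := rfl

/-- States of the transducer-image automaton. -/
def TSt := Option (Ph × S × QT × Buf T)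

instance [Finite S] [Finite QT] : Finite (TSt T (S := S)) := by
  unfold TSt; infer_instance

/-- Writing transitions of the transducer-image automaton. -/
inductive TW : TSt T (S := S) → Option (EndM δ) → List W → TSt T (S := S) → Prop
  | start : TW none (some EndM.lmark) [] (some (Ph.m0, M.s₀, T.init, bnil T))
  | eps {ph : Ph} {s s' : S} {x : List W} {t : QT} :
      (s, none, x, s') ∈ M.transWr →
      TW (some (ph, s, t, bnil T)) none x (some (ph, s', t, bnil T))
  | readL {s s' : S} {x : List W} {t : QT} :
      (s, some EndM.lmark, x, s') ∈ M.transWr →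
      TW (some (Ph.m0, s, t, bnil T)) none x (some (Ph.m1, s', t, bnil T))
  | teps {s : S} {t t' : QT} {y : List δ} (hw : M.isWr s) (h : (t, none, y, t') ∈ T.trans) :
      TW (some (Ph.m1, s, t, bnil T)) none [] (some (Ph.m1, s, t', bsuf T h))
  | comb {s s' : S} {x : List W} {c : σ} {t t' : QT} {y : List δ}
      (hm : (s, some (EndM.lt c), x, s') ∈ M.transWr) (h : (t, some c, y, t') ∈ T.trans) :
      TW (some (Ph.m1, s, t, bnil T)) none x (some (Ph.m1, s', t', bsuf T h))
  | drain {s : S} {t : QT} {d : δ} {b' b : Buf T} (h : b'.1 = d :: b.1) :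
      TW (some (Ph.m1, s, t, b')) (some (EndM.lt d)) [] (some (Ph.m1, s, t, b))
  | readR {s s' : S} {x : List W} {t : QT}
      (hm : (s, some EndM.rmark, x, s') ∈ M.transWr) (ht : t ∈ T.accept) :
      TW (some (Ph.m1, s, t, bnil T)) (some EndM.rmark) x (some (Ph.m2, s', t, bnil T))

/-- Query transitions of the transducer-image automaton. -/
inductive TQ : TSt T (S := S) → Q → R → TSt T (S := S) → Prop
  | mk {ph : Ph} {s s' : S} {q : Q} {r : R} {t : QT} :
      (s, q, r, s') ∈ M.transQu →
      TQ (some (ph, s, t, bnil T)) q r (some (ph, s', t, bnil T))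

variable [Finite S] [Finite QT] [Finite δ]

/-- The transducer-image automaton. -/
def tAut : ProtAut δ W Q R (TSt T (S := S)) where
  isWr st := match st with
    | none => True
    | some (_, s, _, b) => M.isWr s ∨ b.1 ≠ []
  s₀ := none
  F := {st | ∃ s t, st = some (Ph.m2, s, t, bnil T) ∧ s ∈ M.F}
  s₀_not_F := by rintro ⟨s, t, h, -⟩; simp at h
  transWr := {tu | TW T M tu.1 tu.2.1 tu.2.2.1 tu.2.2.2}
  transQu := {tu | TQ T M tu.1 tu.2.1 tu.2.2.1 tu.2.2.2}
  wr_src := by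
    rintro ⟨a, b, c, d⟩ h
    cases h with
    | start => trivial
    | eps hm => exact Or.inl (M.wr_src _ hm)
    | readL hm => exact Or.inl (M.wr_src _ hm)
    | teps hw h => exact Or.inl hw
    | comb hm h => exact Or.inl (M.wr_src _ hm)
    | drain h => exact Or.inr (by simp [h])
    | readR hm ht => exact Or.inl (M.wr_src _ hm)
  qu_src := by
    rintro ⟨a, b, c, d⟩ h
    cases h with
    | mk hq =>
      rintro (h | h)
      · exact M.qu_src _ hq h
      · exact h rfl
  qu_tgt := by
    rintro ⟨a, b, c, d⟩ h
    cases h with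
    | mk hq => exact Or.inl (M.qu_tgt _ hq)
  transWr_fin := by
    have hX : (insert [] ((fun t => t.2.2.1) '' M.transWr) : Set (List W)).Finite :=
      (M.transWr_fin.image _).insert _
    refine Set.Finite.subset (Set.finite_univ.prod (Set.finite_univ.prod
      (hX.prod Set.finite_univ))) ?_
    rintro ⟨a, b, c, d⟩ h
    refine ⟨Set.mem_univ _, Set.mem_univ _, ?_, Set.mem_univ _⟩
    cases h with
    | start => exact Set.mem_insert _ _
    | eps hm => exact Set.mem_insert_of_mem _ ⟨_, hm, rfl⟩
    | readL hm => exact Set.mem_insert_of_mem _ ⟨_, hm, rfl⟩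
    | teps hw h => exact Set.mem_insert _ _
    | comb hm h => exact Set.mem_insert_of_mem _ ⟨_, hm, rfl⟩
    | drain h => exact Set.mem_insert _ _
    | readR hm ht => exact Set.mem_insert_of_mem _ ⟨_, hm, rfl⟩

end Trans
end Stmt19
namespace Stmt19
open Relation

section TransFwd
variable {σ δ QT W Q R S : Type} (T : FST σ δ QT) (M : ProtAut σ W Q R S)
  [Finite S] [Finite QT] [Finite δ] {P : Set (List (PLet W Q R))}

lemma mem_tw {a : TSt T (S := S)} {b c} {d : TSt T (S := S)} (h : TW T M a b c d) :
    (a, b, c, d) ∈ (tAut T M).transWr := h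

lemma mem_tq {a : TSt T (S := S)} {b c} {d : TSt T (S := S)} (h : TQ T M a b c d) :
    (a, b, c, d) ∈ (tAut T M).transQu := h

lemma tAut_estep (ph : Ph) (t : QT) {c c' : S × List W × List (PLet W Q R)}
    (h : EStep M P c c') (V : List (EndM δ)) :
    ProtStep (tAut T M) P (some (ph, c.1, t, bnil T), V, c.2)
      (some (ph, c'.1, t, bnil T), V, c'.2) := by
  cases h with
  | wr hm => exact step_wr' (mem_tw T M (TW.eps hm)) rfl rfl
  | qu hq hp => exact ProtStep.qu (mem_tq T M (TQ.mk hq)) hp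

lemma tAut_erun (ph : Ph) (t : QT) {c c' : S × List W × List (PLet W Q R)}
    (h : ReflTransGen (EStep M P) c c') (V : List (EndM δ)) :
    ReflTransGen (ProtStep (tAut T M) P) (some (ph, c.1, t, bnil T), V, c.2)
      (some (ph, c'.1, t, bnil T), V, c'.2) :=
  ReflTransGen.lift (fun c : S × List W × List (PLet W Q R) => ((some (ph, c.1, t, bnil T) : TSt T (S := S)), V, c.2))
    (fun _ _ hs => tAut_estep T M ph t hs V) _ _ h

lemma tAut_drain (s : S) (t : QT) (V : List (EndM δ)) (u : List W)
    (p : List (PLet W Q R)) :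
    ∀ (l : List δ) (b : Buf T), b.1 = l →
    ReflTransGen (ProtStep (tAut T M) P)
      (some (Ph.m1, s, t, b), l.map EndM.lt ++ V, u, p)
      (some (Ph.m1, s, t, bnil T), V, u, p) := by
  intro l
  induction l with
  | nil =>
    intro b hb
    have : b = bnil T := Subtype.ext (by simp [hb])
    subst this
    exact ReflTransGen.refl
  | cons d l ih =>
    intro b hb
    obtain ⟨y, hy, hsuf⟩ := b.2
    have hb2 : ∃ b₂ : Buf T, b₂.1 = l :=
      ⟨⟨l, y, hy, ((List.suffix_cons d l).trans (hb ▸ hsuf))⟩, rfl⟩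
    obtain ⟨b₂, hb₂⟩ := hb2
    refine ReflTransGen.head (step_wr' (mem_tw T M (TW.drain (b' := b) (b := b₂)
      (by rw [hb, hb₂]))) rfl (List.append_nil u).symm) ?_
    exact ih b₂ hb₂

lemma tAut_fwd {sf : S} {pf : List (PLet W Q R)} (hsf : sf ∈ M.F)
    {u : List σ} {w : List δ} {tq f : QT}
    (hpath : T.Path tq u w f) (hacc : f ∈ T.accept) :
    ∀ {s : S} {uw : List W} {p : List (PLet W Q R)},
    ReflTransGen (ProtStep M P) (s, u.map EndM.lt ++ [EndM.rmark], uw, p)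
      (sf, [], [], pf) →
    ReflTransGen (ProtStep (tAut T M) P)
      (some (Ph.m1, s, tq, bnil T), w.map EndM.lt ++ [EndM.rmark], uw, p)
      (some (Ph.m2, sf, f, bnil T), [], [], pf) := by
  induction hpath with
  | refl q =>
    intro s uw p hrun
    obtain ⟨s₁, u₁, p₁, s₂, x, he, hm, hrest⟩ := peel hrun
    have A1 := tAut_erun T M Ph.m1 q he [EndM.rmark]
    have A2 : ProtStep (tAut T M) P (some (Ph.m1, s₁, q, bnil T), [EndM.rmark], u₁, p₁)
        (some (Ph.m2, s₂, q, bnil T), [], u₁ ++ x, p₁) :=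
      step_wr' (mem_tw T M (TW.readR hm hacc)) rfl rfl
    have A3 := tAut_erun T M Ph.m2 q (nil_run hrest) ([] : List (EndM δ))
    exact (A1.tail A2).trans A3
  | @step t t' f x y u' w' hmem hpath' ih =>
    intro s uw p hrun
    have key : ∀ {s₂ : S} {uw₂ p₂}, M.isWr s₂ →
        ReflTransGen (ProtStep M P) (s₂, ((x.toList ++ u').map EndM.lt ++ [EndM.rmark] :
          List (EndM σ)), uw₂, p₂) (sf, [], [], pf) →
        ReflTransGen (ProtStep (tAut T M) P)
          (some (Ph.m1, s₂, t, bnil T), (y ++ w').map EndM.lt ++ [EndM.rmark], uw₂, p₂)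
          (some (Ph.m2, sf, f, bnil T), [], [], pf) := by
      intro s₂ uw₂ p₂ hws hrun₂
      rw [show ((y ++ w').map (EndM.lt : δ → EndM δ) ++ [EndM.rmark]) =
        y.map EndM.lt ++ (w'.map EndM.lt ++ [EndM.rmark]) by simp]
      cases x with
      | none =>
        refine ReflTransGen.head
          (step_wr' (mem_tw T M (TW.teps hws hmem)) rfl (List.append_nil uw₂).symm) ?_
        exact (tAut_drain T M s₂ t' (w'.map EndM.lt ++ [EndM.rmark]) uw₂ p₂ y
          (bsuf T hmem) rfl).trans (ih hacc hrun₂)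
      | some c =>
        obtain ⟨s₃, u₃, p₃, s₄, x₄, he, hm, hrest⟩ := peel hrun₂
        refine ((tAut_erun T M Ph.m1 t he
          (y.map EndM.lt ++ (w'.map EndM.lt ++ [EndM.rmark]))).tail
          (step_wr' (mem_tw T M (TW.comb hm hmem)) rfl rfl)).trans ?_
        exact (tAut_drain T M s₄ t' (w'.map EndM.lt ++ [EndM.rmark]) (u₃ ++ x₄) p₃ y
          (bsuf T hmem) rfl).trans (ih hacc hrest)
    by_cases hws : M.isWr s
    · exact key hws hrun
    · generalize hV : ((x.toList ++ u').map (EndM.lt : σ → EndM σ) ++ [EndM.rmark] :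
        List (EndM σ)) = V at hrun ⊢
      rcases hrun.cases_head with heq | ⟨c, hstep, hrun'⟩
      · exfalso
        have hV2 : V = [] := congrArg (fun c => c.2.1) heq
        rw [hV2] at hV
        simp at hV
      · cases hstep with
        | wr hm => exact absurd (M.wr_src _ hm) hws
        | qu hq hp =>
          subst hV
          refine ReflTransGen.head (ProtStep.qu (mem_tq T M (TQ.mk hq)) hp) ?_
          exact key (M.qu_tgt _ hq) hrun'

end TransFwd
end Stmt19
namespace Stmt19
open Relation

section TransBwd
variable {σ δ QT W Q R S : Type} (T : FST σ δ QT) (M : ProtAut σ W Q R S)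
  [Finite S] [Finite QT] [Finite δ] (P : Set (List (PLet W Q R)))

/-- The simulation invariant for the backward direction. -/
def TInv (w : List δ) : PConfig δ W Q R (TSt T (S := S)) → Prop
  | (none, v, uw, p) => v = tape w ∧ uw = [] ∧ p = []
  | (some (Ph.m0, s, t, b), v, uw, p) =>
      t = T.init ∧ b = bnil T ∧ v = w.map EndM.lt ++ [EndM.rmark] ∧
        ReflTransGen (EStep M P) (M.s₀, [], []) (s, uw, p)
  | (some (Ph.m1, s, t, b), v, uw, p) =>
      ∃ w₁ w₂ u₁, w = w₁ ++ w₂ ∧ v = w₂.map EndM.lt ++ [EndM.rmark] ∧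
        T.Path T.init u₁ (w₁ ++ b.1) t ∧
        ReflTransGen (ProtStep M P) (M.s₀, EndM.lmark :: u₁.map EndM.lt, [], [])
          (s, [], uw, p)
  | (some (Ph.m2, s, t, b), v, uw, p) =>
      b = bnil T ∧ v = [] ∧ t ∈ T.accept ∧
        ∃ u₁, T.Path T.init u₁ w t ∧
          ReflTransGen (ProtStep M P) (M.s₀, tape u₁, [], []) (s, [], uw, p)

lemma tInv_step {w : List δ} {c c' : PConfig δ W Q R (TSt T (S := S))}
    (hI : TInv T M P w c) (h : ProtStep (tAut T M) P c c') : TInv T M P w c' := by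
  cases h with
  | @wr st st' a x v uw p h =>
    have h' : TW T M st a x st' := h
    clear h
    cases h' with
    | start =>
      obtain ⟨hv, rfl, rfl⟩ := hI
      have hv' : v = w.map EndM.lt ++ [EndM.rmark] := by
        have h2 : EndM.lmark :: v =
            EndM.lmark :: (w.map EndM.lt ++ [EndM.rmark]) := hv
        injection h2
      exact ⟨rfl, rfl, hv', ReflTransGen.refl⟩
    | @eps ph s s' x' t hm =>
      cases ph with
      | m0 =>
        obtain ⟨ht, hb, hv, hrun⟩ := hI
        exact ⟨ht, rfl, hv, hrun.tail (EStep.wr hm)⟩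
      | m1 =>
        obtain ⟨w₁, w₂, u₁, hw, hv, hpath, hrun⟩ := hI
        exact ⟨w₁, w₂, u₁, hw, hv, hpath, hrun.tail (step_wr' hm rfl rfl)⟩
      | m2 =>
        obtain ⟨hb, hv, hacc, u₁, hpath, hrun⟩ := hI
        exact ⟨rfl, hv, hacc, u₁, hpath, hrun.tail (step_wr' hm rfl rfl)⟩
    | @readL s s' x' t hm =>
      obtain ⟨ht, hb, hv, hrun⟩ := hI
      subst ht
      refine ⟨[], w, [], rfl, hv, by simpa using FST.Path.refl (T := T) T.init, ?_⟩
      exact (estep_run hrun [EndM.lmark]).tail (step_wr' hm rfl rfl)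
    | @teps s t t' y hw hT =>
      obtain ⟨w₁, w₂, u₁, hw12, hv, hpath, hrun⟩ := hI
      exact ⟨w₁, w₂, u₁, hw12, hv, by simpa using FST.Path.snoc hpath hT,
        by simpa using hrun⟩
    | @comb s s' x' c t t' y hm hT =>
      obtain ⟨w₁, w₂, u₁, hw12, hv, hpath, hrun⟩ := hI
      refine ⟨w₁, w₂, u₁ ++ [c], hw12, hv, by simpa using FST.Path.snoc hpath hT, ?_⟩
      have := (run_append hrun [EndM.lt c]).tail (step_wr' hm rfl rfl)
      simpa using this
    | @drain s t d b' b hd =>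
      obtain ⟨w₁, w₂, u₁, hw12, hv, hpath, hrun⟩ := hI
      cases w₂ with
      | nil =>
        exfalso
        have h2 : (EndM.lt d :: v : List (EndM δ)) = [EndM.rmark] := hv
        simp at h2
      | cons e w₂' =>
        have h2 : EndM.lt d = EndM.lt e ∧ v = w₂'.map EndM.lt ++ [EndM.rmark] := by
          have : (EndM.lt d :: v : List (EndM δ)) =
              EndM.lt e :: (w₂'.map EndM.lt ++ [EndM.rmark]) := hv
          injection this with h3 h4
          exact ⟨h3, h4⟩
        obtain ⟨h3, hv'⟩ := h2
        have hde : d = e := by injection h3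
        subst hde
        refine ⟨w₁ ++ [d], w₂', u₁, by simp [hw12], hv', ?_, by simpa using hrun⟩
        rw [hd] at hpath
        simpa [List.append_assoc] using hpath
    | @readR s s' x' t hm ht =>
      obtain ⟨w₁, w₂, u₁, hw12, hv, hpath, hrun⟩ := hI
      cases w₂ with
      | cons e w₂' =>
        exfalso
        have h2 : (EndM.rmark :: v : List (EndM δ)) =
            EndM.lt e :: (w₂'.map EndM.lt ++ [EndM.rmark]) := hv
        simp at h2
      | nil =>
        have hv' : v = [] := by
          have : (EndM.rmark :: v : List (EndM δ)) = [EndM.rmark] := hv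
          injection this
        have hw1 : w = w₁ := by simpa using hw12
        subst hw1
        refine ⟨rfl, hv', ht, u₁, by simpa using hpath, ?_⟩
        have := (run_append hrun [EndM.rmark]).tail (step_wr' hm rfl rfl)
        simpa [tape] using this
  | @qu st st' q r v uw p h hp =>
    have h' : TQ T M st q r st' := h
    clear h
    cases h' with
    | @mk ph s s' q r t hq =>
      cases ph with
      | m0 =>
        obtain ⟨ht, hb, hv, hrun⟩ := hI
        exact ⟨ht, rfl, hv, hrun.tail (EStep.qu hq hp)⟩
      | m1 =>
        obtain ⟨w₁, w₂, u₁, hw, hv, hpath, hrun⟩ := hI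
        exact ⟨w₁, w₂, u₁, hw, hv, hpath, hrun.tail (ProtStep.qu hq hp)⟩
      | m2 =>
        obtain ⟨hb, hv, hacc, u₁, hpath, hrun⟩ := hI
        exact ⟨rfl, hv, hacc, u₁, hpath, hrun.tail (ProtStep.qu hq hp)⟩

lemma tInv_run {w : List δ} {c c' : PConfig δ W Q R (TSt T (S := S))}
    (h : ReflTransGen (ProtStep (tAut T M) P) c c') (hI : TInv T M P w c) :
    TInv T M P w c' := by
  induction h with
  | refl => exact hI
  | tail _ hstep ih => exact tInv_step T M P ih hstep

lemma tAut_lang : (tAut T M).Lang P = T.Img (M.Lang P) := by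
  ext w
  constructor
  · rintro ⟨p, hp, stf, ⟨s, t, rfl, hsF⟩, hrun⟩
    have hI := tInv_run T M P (w := w) hrun ⟨rfl, rfl, rfl⟩
    obtain ⟨-, -, hacc, u₁, hpath, hrun₁⟩ := hI
    exact ⟨u₁, ⟨p, hp, s, hsF, hrun₁⟩, t, hacc, hpath⟩
  · rintro ⟨u, ⟨p, hp, sf, hsf, hrun⟩, f, hacc, hpath⟩
    obtain ⟨s₁, u₁, p₁, s₂, x, he, hm, hrest⟩ := peel (a := EndM.lmark)
      (v := u.map EndM.lt ++ [EndM.rmark]) hrun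
    refine ⟨p, hp, some (Ph.m2, sf, f, bnil T), ⟨sf, f, rfl, hsf⟩, ?_⟩
    refine ReflTransGen.head (step_wr' (mem_tw T M TW.start) rfl rfl) ?_
    refine ((tAut_erun T M Ph.m0 T.init he (w.map EndM.lt ++ [EndM.rmark])).tail
      (step_wr' (mem_tw T M (TW.readL hm)) rfl rfl)).trans ?_
    exact tAut_fwd T M hsf hpath hacc hrest

end TransBwd
end Stmt19

/-- For every language of correct protocols `PROT`, the class of
`1NB_PROT`-recognizable languages is a rational cone closed under union: it is closed
under images of finite-state transducers and under binary union. -/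
theorem stmt19 {W Q R : Type} [Fintype W] [Fintype Q] [Fintype R]
    [Nonempty Q] [Nonempty R] (P : ProtLang W Q R) :
    (∀ (σ δ : Type) (_ : Fintype σ) (_ : Fintype δ) (L : Set (List σ))
        (QT : Type) (_ : Fintype QT) (T : FST σ δ QT),
        L ∈ ProtCL P σ → T.Img L ∈ ProtCL P δ) ∧
    (∀ (σ : Type) (_ : Fintype σ) (L₁ L₂ : Set (List σ)),
        L₁ ∈ ProtCL P σ → L₂ ∈ ProtCL P σ → L₁ ∪ L₂ ∈ ProtCL P σ) := by
  
  constructor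
  · rintro σ δ Fσ Fδ L QT FQT T ⟨n, M, rfl⟩
    haveI := Fδ
    haveI := FQT
    have h := Stmt19.lang_mem_protCL (Stmt19.tAut T M) P
    rwa [Stmt19.tAut_lang] at h
  · rintro σ Fσ L₁ L₂ ⟨n₁, M₁, rfl⟩ ⟨n₂, M₂, rfl⟩
    have h := Stmt19.lang_mem_protCL (Stmt19.uAut M₁ M₂) P
    rwa [Stmt19.uAut_lang] at h
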